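/- Fix i, j ∈ m with i = j ∈ P for some P ∈ 𝔔, and let {s_0, s_1, ...} ⊆ m^{<ω} be an (i,i)-sequence over x ∈ m^ω. Then the functions g_{s_k} converge pointwise to the indicator function of the singleton {(x,P)} on X_𝔔. If instead i ≠ j, or i = j does not belong to any member of 𝔔, and {s_k} is an (i,j)-sequence over x, then g_{s_k} converges pointwise to the zero function. -/

import Mathlib

open Filter Topology

/-- `s` is an initial segment of the branch `x ∈ m^ω`. -/
def PrefixF {m : ℕ} (s : List (Fin m)) (x : ℕ → Fin m) : Prop :=
  ∀ k, (h : k < s.length) → s.get ⟨k, h⟩ = x k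

/-- The underlying Polish set `X_𝔔 = m^{<ω} ∪ (m^ω × 𝔔)`. -/
def XQ (m : ℕ) (Q : Set (Set (Fin m))) : Type :=
  List (Fin m) ⊕ ((ℕ → Fin m) × ↥Q)

open Classical in
/-- The function `g_s : X_𝔔 → {0,1}`: `g_s(t) = 1` iff `t = s`, and `g_s(y,P) = 1` iff
`s⌢ξ` is an initial segment of `y` for some `ξ ∈ P`. -/
noncomputable def gfun (m : ℕ) (Q : Set (Set (Fin m))) (s : List (Fin m)) :
    XQ m Q → Bool := fun z =>
  match z with
  | .inl t => decide (t = s)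
  | .inr yP => if ∃ ξ ∈ (yP.2 : Set (Fin m)), PrefixF (s ++ [ξ]) yP.1 then true else false

open Classical in
/-- The indicator function of the singleton `{(x,P)} ⊆ X_𝔔`. -/
noncomputable def gind (m : ℕ) (Q : Set (Set (Fin m))) (x : ℕ → Fin m) (P : ↥Q) :
    XQ m Q → Bool := fun z => if z = Sum.inr (x, P) then true else false

/-- The zero function on `X_𝔔`. -/
def gzero (m : ℕ) (Q : Set (Set (Fin m))) : XQ m Q → Bool := fun _ => false

/-- `K_∞(𝔔)`: the pointwise closure of `{g_s : s ∈ m^{<ω}}` in `{0,1}^{X_𝔔}`. -/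
def Kinf (m : ℕ) (Q : Set (Set (Fin m))) : Set (XQ m Q → Bool) :=
  closure (Set.range (gfun m Q))

/-- `IncFB x s (i, j)` is the incidence `inc(x, s) = (i, j)` of a branch `x` with a node
`s`: either `s⌢i ≤ x` (and `j = i`), or the meet `r = x ∧ s` is proper in both, with
`r⌢i ≤ x` and `r⌢j ≤ s`. -/
def IncFB {m : ℕ} (x : ℕ → Fin m) (s : List (Fin m)) (p : Fin m × Fin m) : Prop :=
  (p.2 = p.1 ∧ PrefixF (s ++ [p.1]) x) ∨
  (p.1 ≠ p.2 ∧ ∃ r : List (Fin m), PrefixF (r ++ [p.1]) x ∧ (r ++ [p.2]) <+: s)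

/-- The meet `s ∧ x` has length at least `N`. -/
def MeetLarge {m : ℕ} (x : ℕ → Fin m) (s : List (Fin m)) (N : ℕ) : Prop :=
  ∃ r : List (Fin m), N ≤ r.length ∧ PrefixF r x ∧ r <+: s

lemma prefixF_getElem {m : ℕ} {s : List (Fin m)} {x : ℕ → Fin m} (h : PrefixF s x)
    {n : ℕ} (hn : n < s.length) : s[n] = x n := h n hn

lemma prefixF_concat {m : ℕ} {s : List (Fin m)} {ξ : Fin m} {y : ℕ → Fin m}
    (h : PrefixF (s ++ [ξ]) y) : PrefixF s y ∧ y s.length = ξ := by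
  constructor
  · intro k hk
    have hk' : k < (s ++ [ξ]).length := by simp; omega
    have := h k hk'
    rwa [List.get_eq_getElem, List.getElem_append_left hk] at this
  · have hk' : s.length < (s ++ [ξ]).length := by simp
    have := h s.length hk'
    simp only [List.get_eq_getElem, Fin.val_mk, List.getElem_concat_length] at this
    exact this.symm

/-- Convergence in `K_∞(𝔔)` for a pairwise disjoint family `𝔔`: if `(s_k)` is an
`(i,j)`-sequence over `x ∈ m^ω`, then when `i = j ∈ P ∈ 𝔔` the functions `g_{s_k}`
converge pointwise to the indicator of `{(x,P)}`; and when `i ≠ j`, or `i = j` belongs to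
no member of `𝔔`, they converge pointwise to the zero function. -/
theorem Kinf_convergence (m : ℕ) (Q : Set (Set (Fin m))) (hdisj : Q.Pairwise Disjoint)
    (i j : Fin m) (x : ℕ → Fin m) (s : ℕ → List (Fin m))
    (hinc : ∀ k, IncFB x (s k) (i, j))
    (hmeet : ∀ N : ℕ, ∀ᶠ k in Filter.atTop, MeetLarge x (s k) N) :
    (∀ (P : Set (Fin m)) (hP : P ∈ Q), i = j → i ∈ P →
      Filter.Tendsto (fun k => gfun m Q (s k)) Filter.atTop (𝓝 (gind m Q x ⟨P, hP⟩))) ∧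
    ((i ≠ j ∨ (i = j ∧ ∀ P ∈ Q, i ∉ P)) →
      Filter.Tendsto (fun k => gfun m Q (s k)) Filter.atTop (𝓝 (gzero m Q))) := by
  classical
  have hlen : ∀ N : ℕ, ∀ᶠ k in atTop, N ≤ (s k).length := by
    intro N
    filter_upwards [hmeet N] with k hk
    obtain ⟨r, hr1, _, hr3⟩ := hk
    exact le_trans hr1 hr3.length_le
  have hagree : ∀ n : ℕ, ∀ᶠ k in atTop,
      ∃ h : n < (s k).length, (s k)[n] = x n := by
    intro n
    filter_upwards [hmeet (n + 1)] with k hk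
    obtain ⟨r, hr1, hr2, hr3⟩ := hk
    have hn : n < r.length := by omega
    refine ⟨lt_of_lt_of_le hn hr3.length_le, ?_⟩
    rw [← hr3.getElem hn]
    exact prefixF_getElem hr2 hn
  have hinl : ∀ t : List (Fin m), ∀ᶠ k in atTop,
      gfun m Q (s k) (Sum.inl t) = false := by
    intro t
    filter_upwards [hlen (t.length + 1)] with k hk
    simp only [gfun, decide_eq_false_iff_not]
    intro h
    rw [h] at hk
    omega
  have hne : ∀ (y : ℕ → Fin m) (P' : ↥Q), y ≠ x → ∀ᶠ k in atTop,
      gfun m Q (s k) (Sum.inr (y, P')) = false := by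
    intro y P' hy
    obtain ⟨n, hn⟩ : ∃ n, y n ≠ x n := by
      by_contra h; push_neg at h; exact hy (funext h)
    filter_upwards [hagree n] with k hk
    obtain ⟨h1, h2⟩ := hk
    simp only [gfun]
    refine if_neg ?_
    rintro ⟨ξ, hξ1, hξ2⟩
    have h3 : (s k)[n] = y n := prefixF_getElem (prefixF_concat hξ2).1 h1
    exact hn (h3.symm.trans h2)
  constructor
  · intro P hP hij hiP
    have hpre : ∀ k, PrefixF (s k ++ [i]) x := by
      intro k
      rcases hinc k with ⟨_, h⟩ | ⟨hne', _⟩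
      · exact h
      · exact absurd hij hne'
    rw [tendsto_pi_nhds]
    intro z
    refine tendsto_nhds_of_eventually_eq ?_
    match z with
    | Sum.inl t =>
      have hg : gind m Q x ⟨P, hP⟩ (Sum.inl t) = false := by simp [gind]
      rw [hg]; exact hinl t
    | Sum.inr (y, P') =>
      by_cases hy : y = x
      · subst hy
        by_cases hPP : P' = ⟨P, hP⟩
        · subst hPP
          have hg : gind m Q y ⟨P, hP⟩ (Sum.inr (y, ⟨P, hP⟩)) = true := by simp [gind]; rfl
          rw [hg]
          refine Eventually.of_forall fun k => ?_
          simp only [gfun]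
          exact if_pos ⟨i, hiP, hpre k⟩
        · have hg : gind m Q y ⟨P, hP⟩ (Sum.inr (y, P')) = false := by
            simp only [gind]
            exact if_neg (fun h => hPP (congrArg Prod.snd (Sum.inr.inj h)))
          rw [hg]
          refine Eventually.of_forall fun k => ?_
          simp only [gfun]
          refine if_neg ?_
          rintro ⟨ξ, hξ1, hξ2⟩
          have h1 : y (s k).length = ξ := (prefixF_concat hξ2).2
          have h2 : y (s k).length = i := (prefixF_concat (hpre k)).2
          have hξi : ξ = i := h1.symm.trans h2
          have hPne : (P' : Set (Fin m)) ≠ P := fun h => hPP (Subtype.ext h)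
          exact Set.disjoint_left.mp (hdisj P'.2 hP hPne) (hξi ▸ hξ1) hiP
      · have hg : gind m Q x ⟨P, hP⟩ (Sum.inr (y, P')) = false := by
          simp only [gind]
          exact if_neg (fun h => hy (congrArg Prod.fst (Sum.inr.inj h)))
        rw [hg]
        exact hne y P' hy
  · intro hcase
    rw [tendsto_pi_nhds]
    intro z
    refine tendsto_nhds_of_eventually_eq ?_
    match z with
    | Sum.inl t => exact hinl t
    | Sum.inr (y, P') =>
      by_cases hy : y = x
      · subst hy
        refine Eventually.of_forall fun k => ?_
        show gfun m Q (s k) (Sum.inr (y, P')) = false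
        simp only [gfun]
        refine if_neg ?_
        rintro ⟨ξ, hξ1, hξ2⟩
        rcases hcase with hij | ⟨hij, hnot⟩
        · rcases hinc k with ⟨hji, _⟩ | ⟨_, r, hr1, hr2⟩
          · exact hij hji.symm
          · have hxr : y r.length = i := (prefixF_concat hr1).2
            have hlen2 : r.length < (s k).length := by
              have := hr2.length_le; simp at this; omega
            have hrj : (r ++ [j])[r.length]'(by simp) = j := by simp
            have hskr : (s k)[r.length] = j := by
              rw [← hr2.getElem (by simp : r.length < (r ++ [j]).length)]
              exact hrj
            have hsx : (s k)[r.length] = y r.length :=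
              prefixF_getElem (prefixF_concat hξ2).1 hlen2
            exact hij (hxr.symm.trans (hsx.symm.trans hskr))
        · have hpre : PrefixF (s k ++ [i]) y := by
            rcases hinc k with ⟨_, h⟩ | ⟨hne', _⟩
            · exact h
            · exact absurd hij hne'
          have h1 : y (s k).length = ξ := (prefixF_concat hξ2).2
          have h2 : y (s k).length = i := (prefixF_concat hpre).2
          exact hnot P' P'.2 ((h1.symm.trans h2) ▸ hξ1)
      · exact hne y P' hy
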